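/- Let K ≥ 1, let μ ∈ [0,1]^K and let g ∈ ℝ^K with g_i ≥ 0 for all i. Then max over all nonempty subsets A ⊆ {1,…,K} of (1/|A|)·(∑_{i∈A} √(μ_i(1−μ_i)) g_i)² is at least (1/(1+ln K))·∑_{i=1}^K μ_i(1−μ_i) g_i². -/

import Mathlib

open Finset in
/-- Key combinatorial lemma: for nonnegative `a`, some "top-k" subset works. -/
theorem subset_sum_sq_ge (K : ℕ) (hK : 1 ≤ K) (a : Fin K → ℝ) (ha : ∀ i, 0 ≤ a i) :
    ∃ A : Finset (Fin K), A.Nonempty ∧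
      (∑ i ∈ A, a i) ^ 2 ≥ (A.card : ℝ) / (1 + Real.log K) * ∑ i, (a i) ^ 2 := by
  classical
  -- lexicographic key, breaking ties by index
  let key : Fin K → Lex (ℝ × Fin K) := fun i => toLex (-a i, i)
  have keyinj : Function.Injective key := by
    intro i j h
    have := congrArg (fun x => (ofLex x).2) h
    simpa [key] using this
  have keyle : ∀ i j, key j ≤ key i → a i ≤ a j := by
    intro i j h
    rw [Prod.Lex.le_iff] at h
    rcases h with h | ⟨h, _⟩
    · have h' : -a j < -a i := h
      linarith
    · have h' : -a j = -a i := h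
      linarith
  let Aset : Fin K → Finset (Fin K) := fun i => univ.filter (fun j => key j ≤ key i)
  let r : Fin K → ℕ := fun i => (Aset i).card
  have hmem : ∀ i, i ∈ Aset i := fun i => by simp [Aset]
  have hrpos : ∀ i, 0 < r i := fun i => card_pos.mpr ⟨i, hmem i⟩
  have hrK : ∀ i, r i ≤ K := fun i => by
    simpa using card_le_card (filter_subset _ (univ : Finset (Fin K)))
  have hrinj : Function.Injective r := by
    intro i j hij
    rcases le_total (key i) (key j) with h | h
    · have hsub : Aset i ⊆ Aset j := fun x hx => by
        simp only [Aset, mem_filter] at hx ⊢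
        exact ⟨hx.1, le_trans hx.2 h⟩
      have := Finset.eq_of_subset_of_card_le hsub (le_of_eq hij.symm)
      have hj : j ∈ Aset i := this ▸ hmem j
      simp only [Aset, mem_filter] at hj
      exact keyinj (le_antisymm h hj.2)
    · have hsub : Aset j ⊆ Aset i := fun x hx => by
        simp only [Aset, mem_filter] at hx ⊢
        exact ⟨hx.1, le_trans hx.2 h⟩
      have := Finset.eq_of_subset_of_card_le hsub (le_of_eq hij)
      have hj : i ∈ Aset j := this ▸ hmem i
      simp only [Aset, mem_filter] at hj
      exact keyinj (le_antisymm hj.2 h)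
  -- pick maximizer of r i * a i ^ 2
  have huniv : (univ : Finset (Fin K)).Nonempty := by
    have : 0 < K := hK
    exact univ_nonempty_iff.mpr (Fin.pos_iff_nonempty.mp this)
  obtain ⟨i0, _, hmax⟩ := Finset.exists_max_image univ (fun i => (r i : ℝ) * a i ^ 2) huniv
  set M : ℝ := (r i0 : ℝ) * a i0 ^ 2 with hM
  have hM0 : 0 ≤ M := by positivity
  refine ⟨Aset i0, ⟨i0, hmem i0⟩, ?_⟩
  have hlogpos : 0 < 1 + Real.log K := by
    have : (0:ℝ) ≤ Real.log K := Real.log_nonneg (by exact_mod_cast hK)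
    linarith
  -- lower bound on the sum over Aset i0
  have hsum_lb : (r i0 : ℝ) * a i0 ≤ ∑ i ∈ Aset i0, a i := by
    have : ∑ i ∈ Aset i0, a i0 ≤ ∑ i ∈ Aset i0, a i := by
      refine Finset.sum_le_sum ?_
      intro j hj
      simp only [Aset, mem_filter] at hj
      exact keyle i0 j hj.2
    simpa [mul_comm] using this
  have hlb : (r i0 : ℝ) * M ≤ (∑ i ∈ Aset i0, a i) ^ 2 := by
    have h1 : ((r i0 : ℝ) * a i0) ^ 2 ≤ (∑ i ∈ Aset i0, a i) ^ 2 := by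
      apply pow_le_pow_left₀ (mul_nonneg (by positivity) (ha i0)) hsum_lb
    calc (r i0 : ℝ) * M = ((r i0 : ℝ) * a i0) ^ 2 := by rw [hM]; ring
    _ ≤ _ := h1
  -- upper bound on ∑ a i ^ 2
  have hub : ∑ i, a i ^ 2 ≤ (1 + Real.log K) * M := by
    have h1 : ∀ i, a i ^ 2 ≤ M / r i := by
      intro i
      rw [le_div_iff₀ (by exact_mod_cast hrpos i)]
      have := hmax i (mem_univ i)
      linarith [this]
    have h2 : ∑ i, a i ^ 2 ≤ ∑ i, M / r i := Finset.sum_le_sum fun i _ => h1 i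
    have h3 : ∑ i : Fin K, M / (r i : ℝ) = M * ∑ i : Fin K, ((r i : ℝ))⁻¹ := by
      rw [Finset.mul_sum]; simp [div_eq_mul_inv]
    have h4 : ∑ i : Fin K, ((r i : ℝ))⁻¹ ≤ 1 + Real.log K := by
      have himg : ∑ i : Fin K, ((r i : ℝ))⁻¹ = ∑ k ∈ univ.image r, ((k : ℝ))⁻¹ := by
        rw [Finset.sum_image (fun x _ y _ h => hrinj h)]
      have hsub : univ.image r ⊆ Finset.Icc 1 K := by
        intro k hk
        simp only [mem_image] at hk
        obtain ⟨i, _, rfl⟩ := hk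
        exact Finset.mem_Icc.mpr ⟨hrpos i, hrK i⟩
      have h5 : ∑ k ∈ univ.image r, ((k : ℝ))⁻¹ ≤ ∑ k ∈ Finset.Icc 1 K, ((k : ℝ))⁻¹ :=
        Finset.sum_le_sum_of_subset_of_nonneg hsub (fun k _ _ => by positivity)
      have h6 : ∑ k ∈ Finset.Icc 1 K, ((k : ℝ))⁻¹ = (harmonic K : ℝ) := by
        rw [harmonic_eq_sum_Icc]
        push_cast
        rfl
      calc ∑ i : Fin K, ((r i : ℝ))⁻¹ = ∑ k ∈ univ.image r, ((k : ℝ))⁻¹ := himg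
        _ ≤ (harmonic K : ℝ) := by rw [← h6]; exact h5
        _ ≤ 1 + Real.log K := harmonic_le_one_add_log K
    calc ∑ i, a i ^ 2 ≤ M * ∑ i : Fin K, ((r i : ℝ))⁻¹ := by rw [← h3]; exact h2
      _ ≤ M * (1 + Real.log K) := by
          exact mul_le_mul_of_nonneg_left h4 hM0
      _ = (1 + Real.log K) * M := mul_comm _ _
  -- combine
  have : ((Aset i0).card : ℝ) / (1 + Real.log K) * ∑ i, a i ^ 2 ≤ (r i0 : ℝ) * M := by
    have hc : ((Aset i0).card : ℝ) = (r i0 : ℝ) := rfl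
    rw [hc, div_mul_eq_mul_div, div_le_iff₀ hlogpos]
    calc (r i0 : ℝ) * ∑ i, a i ^ 2 ≤ (r i0 : ℝ) * ((1 + Real.log K) * M) :=
          mul_le_mul_of_nonneg_left hub (by positivity)
      _ = (r i0 : ℝ) * M * (1 + Real.log K) := by ring
  exact le_trans this hlb

theorem l1_gini_subset_ge_log_l2_gini (K : ℕ) (hK : 1 ≤ K) (μ g : Fin K → ℝ)
    (hμ0 : ∀ i, 0 ≤ μ i) (hμ1 : ∀ i, μ i ≤ 1) (hg : ∀ i, 0 ≤ g i) :
    ∃ A : Finset (Fin K), A.Nonempty ∧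
      (∑ i ∈ A, Real.sqrt (μ i * (1 - μ i)) * g i) ^ 2
        ≥ (A.card : ℝ) / (1 + Real.log K) * ∑ i, μ i * (1 - μ i) * (g i) ^ 2 := by
  have key := subset_sum_sq_ge K hK (fun i => Real.sqrt (μ i * (1 - μ i)) * g i)
    (fun i => mul_nonneg (Real.sqrt_nonneg _) (hg i))
  obtain ⟨A, hA, hineq⟩ := key
  refine ⟨A, hA, ?_⟩
  have hsq : ∀ i, (Real.sqrt (μ i * (1 - μ i)) * g i) ^ 2 = μ i * (1 - μ i) * (g i) ^ 2 := by
    intro i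
    rw [mul_pow, Real.sq_sqrt (mul_nonneg (hμ0 i) (by linarith [hμ1 i]))]
  simpa [hsq] using hineq
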